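/- Fix N ∈ ℕ, a constant r_g ∈ ℝ, amplitudes K : Fin N → ℝ and exponents s : Fin N → ℝ, and set ξ(x) = r_g/x + Σ_{i=1}^{N} K_i · x^{−s_i} for x > 0 (real powers). Let 0 < a ≤ r and assume that |r_g|/x + Σ_{i=1}^{N} |K_i| · x^{−s_i} < 1 for all x ∈ [a,r]. For a multi-index m = (m₀, m₁, …, m_N) ∈ ℕ^{N+1} with m ≠ 0, write |m| = m₀ + m₁ + ⋯ + m_N, C(m) = (2|m|)!/(4^{|m|} (|m|!)²) · |m|!/(m₀! m₁! ⋯ m_N!), and α(m) = m₀ + Σ_{i=1}^{N} m_i s_i, and define the term T(m) = C(m) · r_g^{m₀} · (Π_{i=1}^{N} K_i^{m_i}) · ∫_a^r x^{−1−α(m)} dx. Then the family (T(m)) indexed by nonzero multi-indices m is summable, and its sum equals ∫_a^r (1/√(1 − ξ(x)) − 1)/x dx. -/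

import Mathlib

open MeasureTheory Set Real Finset

noncomputable def cc (k : ℕ) : ℝ := (Nat.centralBinom k : ℝ) / 4 ^ k

lemma cc_pos (k : ℕ) : 0 < cc k :=
  div_pos (by exact_mod_cast Nat.centralBinom_pos k) (by positivity)

lemma cc_zero : cc 0 = 1 := by simp [cc, Nat.centralBinom_zero]

lemma cc_le_one (k : ℕ) : cc k ≤ 1 := by
  rw [cc, div_le_one (by positivity)]
  have : Nat.centralBinom k ≤ 4 ^ k := by
    have h1 : (2 * k).choose k ≤ ∑ m ∈ range (2 * k + 1), (2 * k).choose m :=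
      Finset.single_le_sum (fun i _ => Nat.zero_le _) (by simp; omega)
    rw [Nat.sum_range_choose] at h1
    calc Nat.centralBinom k = (2 * k).choose k := rfl
      _ ≤ 2 ^ (2 * k) := h1
      _ = 4 ^ k := by rw [pow_mul]; norm_num
  calc (Nat.centralBinom k : ℝ) ≤ ((4 ^ k : ℕ) : ℝ) := by exact_mod_cast this
    _ = 4 ^ k := by push_cast; ring

lemma cc_key (k : ℕ) : (2 * (k + 1) : ℝ) * cc (k + 1) = (2 * k + 1) * cc k := by
  have h := Nat.succ_mul_centralBinom_succ k
  have hc : ((k + 1) * Nat.centralBinom (k + 1) : ℝ) = 2 * (2 * k + 1) * Nat.centralBinom k := by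
    exact_mod_cast congrArg (Nat.cast : ℕ → ℝ) h
  push_cast at hc
  have h4 : (4:ℝ) ^ k ≠ 0 := by positivity
  rw [cc, cc, pow_succ]
  field_simp
  linear_combination 2 * hc

lemma cc_conv (n : ℕ) : ∑ i ∈ range (n + 1), cc i * cc (n - i) = 1 := by
  induction n with
  | zero => simp [cc_zero]
  | succ n ih =>
    set A : ℝ := ∑ i ∈ range (n + 1), (2 * (i : ℝ) + 1) * (cc i * cc (n - i)) with hA
    have key2 : ∑ i ∈ range (n + 2), (2 * (i : ℝ)) * (cc i * cc (n + 1 - i)) = A := by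
      rw [Finset.sum_range_succ']
      simp only [Nat.cast_zero, mul_zero, zero_mul, add_zero]
      refine Finset.sum_congr rfl fun i hi => ?_
      rw [Nat.succ_sub_succ]
      push_cast
      linear_combination cc (n - i) * cc_key i
    have refl1 : ∑ i ∈ range (n + 2), (2 * ((n + 1 - i : ℕ) : ℝ)) * (cc i * cc (n + 1 - i)) = A := by
      rw [← key2, ← Finset.sum_range_reflect]
      refine Finset.sum_congr rfl fun j hj => ?_
      have hj' : j ≤ n + 1 := by simpa [Nat.lt_succ_iff] using hj
      have e1 : n + 2 - 1 - j = n + 1 - j := by omega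
      have e2 : n + 1 - (n + 1 - j) = j := by omega
      rw [e1, e2, mul_comm (cc (n + 1 - j)) (cc j)]
    have reflA : ∑ i ∈ range (n + 1), (2 * ((n - i : ℕ) : ℝ) + 1) * (cc i * cc (n - i)) = A := by
      rw [hA, ← Finset.sum_range_reflect]
      refine Finset.sum_congr rfl fun j hj => ?_
      have hj' : j ≤ n := by simpa [Nat.lt_succ_iff] using hj
      have e1 : n + 1 - 1 - j = n - j := by omega
      have e2 : n - (n - j) = j := by omega
      rw [e1, e2, mul_comm (cc (n - j)) (cc j)]
    have h1 : (2 * ((n : ℝ) + 1)) * ∑ i ∈ range (n + 2), cc i * cc (n + 1 - i) = 2 * A := by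
      rw [Finset.mul_sum]
      have : ∀ i ∈ range (n + 2), (2 * ((n : ℝ) + 1)) * (cc i * cc (n + 1 - i))
          = (2 * (i : ℝ)) * (cc i * cc (n + 1 - i))
            + (2 * ((n + 1 - i : ℕ) : ℝ)) * (cc i * cc (n + 1 - i)) := by
        intro i hi
        have hi' : i ≤ n + 1 := by simpa [Nat.lt_succ_iff] using hi
        have : ((n + 1 - i : ℕ) : ℝ) = (n : ℝ) + 1 - (i : ℝ) := by
          push_cast [Nat.cast_sub hi']; ring
        rw [this]; ring
      rw [Finset.sum_congr rfl this, Finset.sum_add_distrib, key2, refl1]; ring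
    have h2 : (2 * ((n : ℝ) + 1)) * ∑ i ∈ range (n + 1), cc i * cc (n - i) = 2 * A := by
      rw [Finset.mul_sum]
      have : ∀ i ∈ range (n + 1), (2 * ((n : ℝ) + 1)) * (cc i * cc (n - i))
          = (2 * (i : ℝ) + 1) * (cc i * cc (n - i))
            + (2 * ((n - i : ℕ) : ℝ) + 1) * (cc i * cc (n - i)) := by
        intro i hi
        have hi' : i ≤ n := by simpa [Nat.lt_succ_iff] using hi
        have : ((n - i : ℕ) : ℝ) = (n : ℝ) - (i : ℝ) := by
          push_cast [Nat.cast_sub hi']; ring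
        rw [this]; ring
      rw [Finset.sum_congr rfl this, Finset.sum_add_distrib, reflA]
      rw [hA]; ring
    have hne : (2 * ((n : ℝ) + 1)) ≠ 0 := by positivity
    have heq : ∑ i ∈ range (n + 2), cc i * cc (n + 1 - i)
        = ∑ i ∈ range (n + 1), cc i * cc (n - i) :=
      mul_left_cancel₀ hne (h1.trans h2.symm)
    exact heq.trans ih

lemma summable_cc_mul {t : ℝ} (ht : |t| < 1) : Summable fun k => cc k * t ^ k := by
  refine Summable.of_norm_bounded (summable_geometric_of_lt_one (abs_nonneg t) ht) fun k => ?_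
  rw [Real.norm_eq_abs, abs_mul, abs_pow]
  have := (cc_pos k).le
  calc |cc k| * |t| ^ k = cc k * |t| ^ k := by rw [abs_of_nonneg this]
    _ ≤ 1 * |t| ^ k := by
        apply mul_le_mul_of_nonneg_right (cc_le_one k) (by positivity)
    _ = |t| ^ k := one_mul _

noncomputable def pS : FormalMultilinearSeries ℝ ℝ ℝ := FormalMultilinearSeries.ofScalars ℝ cc

lemma pS_radius : 1 ≤ pS.radius := by
  refine ENNReal.le_of_forall_nnreal_lt fun r hr => ?_
  refine FormalMultilinearSeries.le_radius_of_bound _ 1 fun n => ?_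
  have hn : ‖pS n‖ = ‖cc n‖ := FormalMultilinearSeries.ofScalars_norm ℝ cc n
  rw [hn, Real.norm_eq_abs, abs_of_nonneg (cc_pos n).le]
  have hr1 : (r : ℝ) ≤ 1 := by exact_mod_cast hr.le
  calc cc n * (r : ℝ) ^ n ≤ 1 * 1 ^ n := by
        apply mul_le_mul (cc_le_one n) (pow_le_pow_left₀ r.coe_nonneg hr1 n) (by positivity) one_pos.le
    _ = 1 := by norm_num

lemma pS_sum_eq (x : ℝ) : pS.sum x = ∑' k, cc k * x ^ k := by
  unfold FormalMultilinearSeries.sum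
  refine tsum_congr fun n => ?_
  show pS n (fun _ => x) = _
  rw [pS, FormalMultilinearSeries.ofScalars_apply_eq, smul_eq_mul]

lemma tsum_cc_sq {t : ℝ} (ht : |t| < 1) : (∑' k, cc k * t ^ k) ^ 2 = (1 - t)⁻¹ := by
  have hs : Summable fun k => ‖cc k * t ^ k‖ := by
    simpa only [Real.norm_eq_abs] using (summable_cc_mul ht).abs
  rw [sq, tsum_mul_tsum_eq_tsum_sum_antidiagonal_of_summable_norm hs hs]
  have : ∀ n : ℕ, ∑ kl ∈ Finset.HasAntidiagonal.antidiagonal n, (cc kl.1 * t ^ kl.1) * (cc kl.2 * t ^ kl.2)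
      = t ^ n := by
    intro n
    rw [Finset.Nat.sum_antidiagonal_eq_sum_range_succ_mk]
    have : ∀ i ∈ range (n + 1), (cc i * t ^ i) * (cc (n - i) * t ^ (n - i))
        = (cc i * cc (n - i)) * t ^ n := by
      intro i hi
      have hi' : i ≤ n := by simpa [Nat.lt_succ_iff] using hi
      rw [show (cc i * t ^ i) * (cc (n - i) * t ^ (n - i)) = (cc i * cc (n-i)) * (t^i * t^(n-i)) by ring,
        ← pow_add, Nat.add_sub_cancel' hi']
    rw [Finset.sum_congr rfl this, ← Finset.sum_mul, cc_conv, one_mul]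
  rw [tsum_congr this, tsum_geometric_of_norm_lt_one (by rwa [Real.norm_eq_abs])]

lemma hasSum_cc {t : ℝ} (ht : |t| < 1) :
    HasSum (fun k => cc k * t ^ k) (1 / Real.sqrt (1 - t)) := by
  have ht1 : t < 1 := (abs_lt.1 ht).2
  have ht1' : -1 < t := (abs_lt.1 ht).1
  set F : ℝ → ℝ := fun x => ∑' k, cc k * x ^ k with hF
  set G : ℝ → ℝ := fun x => F x * Real.sqrt (1 - x) with hG
  have Gsq : ∀ x ∈ Set.Ioo (-1 : ℝ) 1, G x ^ 2 = 1 := by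
    intro x hx
    have hx' : |x| < 1 := abs_lt.2 ⟨hx.1, hx.2⟩
    have h1x : (0:ℝ) ≤ 1 - x := by linarith [hx.2]
    rw [hG]
    simp only
    rw [mul_pow, Real.sq_sqrt h1x, tsum_cc_sq hx', inv_mul_cancel₀ (by linarith [hx.2] : (1:ℝ) - x ≠ 0)]
  have hIoo : Set.Ioo (-1 : ℝ) 1 ⊆ EMetric.ball (0 : ℝ) pS.radius := by
    intro x hx
    have hx' : |x| < 1 := abs_lt.2 ⟨hx.1, hx.2⟩
    have : edist x 0 < 1 := by
      rw [edist_dist, Real.dist_eq, sub_zero]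
      exact_mod_cast ENNReal.ofReal_lt_one.2 hx'
    exact lt_of_lt_of_le this pS_radius
  have GcontF : ContinuousOn F (Set.Ioo (-1 : ℝ) 1) := by
    have : ContinuousOn pS.sum (EMetric.ball (0 : ℝ) pS.radius) := pS.continuousOn
    have h2 := this.mono hIoo
    refine ContinuousOn.congr h2 fun x _ => ?_
    exact (pS_sum_eq x).symm
  have Gcont : ContinuousOn G (Set.Ioo (-1 : ℝ) 1) :=
    GcontF.mul ((Real.continuous_sqrt.comp (continuous_const.sub continuous_id)).continuousOn)
  have G0 : G 0 = 1 := by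
    have hF0 : F 0 = 1 := by
      rw [hF]
      simp only
      rw [tsum_eq_single 0 (fun k hk => by simp [zero_pow hk])]
      simp [cc_zero]
    rw [hG]; simp [hF0]
  have h0mem : (0:ℝ) ∈ Set.Ioo (-1:ℝ) 1 := by norm_num
  have htmem : t ∈ Set.Ioo (-1:ℝ) 1 := ⟨ht1', ht1⟩
  have hsub : Set.uIcc (0:ℝ) t ⊆ Set.Ioo (-1:ℝ) 1 :=
    Set.ordConnected_Ioo.uIcc_subset h0mem htmem
  have hGt_pos : 0 < G t := by
    by_contra hle
    push_neg at hle
    have h0uIcc : (0:ℝ) ∈ Set.uIcc (G 0) (G t) := by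
      rw [G0]
      exact Set.mem_uIcc.2 (Or.inr ⟨hle, one_pos.le⟩)
    obtain ⟨x, hx, hGx⟩ := intermediate_value_uIcc (Gcont.mono hsub) h0uIcc
    have := Gsq x (hsub hx)
    rw [hGx] at this
    norm_num at this
  have hGt : G t = 1 := by
    have h2 := Gsq t htmem
    have : (G t - 1) * (G t + 1) = 0 := by nlinarith
    rcases mul_eq_zero.1 this with h | h
    · linarith
    · linarith
  have hsqrt_pos : 0 < Real.sqrt (1 - t) := Real.sqrt_pos.2 (by linarith)
  have hFt : F t = 1 / Real.sqrt (1 - t) := by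
    rw [eq_div_iff hsqrt_pos.ne']
    exact hGt
  have := (summable_cc_mul ht).hasSum
  rwa [show ∑' k, cc k * t ^ k = 1 / Real.sqrt (1 - t) from hFt] at this

lemma fiber_hasSum {n : ℕ} (u : Fin n → ℝ) (k : ℕ) :
    HasSum (fun m : {m : Fin n → ℕ // ∑ j, m j = k} =>
        (Nat.multinomial Finset.univ m.1 : ℝ) * ∏ j, u j ^ m.1 j)
      ((∑ j, u j) ^ k) := by
  classical
  rw [Finset.sum_pow_eq_sum_piAntidiag]
  have h := (Finset.piAntidiag Finset.univ k).hasSum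
      (fun m : Fin n → ℕ => (Nat.multinomial Finset.univ m : ℝ) * ∏ j, u j ^ m j)
  exact ((Equiv.subtypeEquivRight
    (fun m => by simp [Finset.mem_piAntidiag] :
      ∀ m : Fin n → ℕ, m ∈ Finset.piAntidiag Finset.univ k ↔ ∑ j, m j = k)).hasSum_iff).mp h

lemma core {n : ℕ} (u : Fin n → ℝ) (h : ∑ j, |u j| < 1) :
    HasSum (fun m : Fin n → ℕ =>
        cc (∑ j, m j) * ((Nat.multinomial Finset.univ m : ℝ) * ∏ j, u j ^ m j))
      (1 / Real.sqrt (1 - ∑ j, u j)) := by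
  classical
  have habs : |∑ j, u j| < 1 := lt_of_le_of_lt (Finset.abs_sum_le_sum_abs _ _) h
  have habs2 : abs (∑ j, |u j|) < 1 := by
    rwa [abs_of_nonneg (Finset.sum_nonneg fun j _ => abs_nonneg _)]
  set F : (Fin n → ℕ) → ℝ := fun m =>
    cc (∑ j, m j) * ((Nat.multinomial Finset.univ m : ℝ) * ∏ j, u j ^ m j) with hFdef
  set σ := Equiv.sigmaFiberEquiv (fun m : Fin n → ℕ => ∑ j, m j) with hσ
  have hfib : ∀ k, HasSum (fun m : {m : Fin n → ℕ // ∑ j, m j = k} => F m.1)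
      (cc k * (∑ j, u j) ^ k) := by
    intro k
    have heq : (fun m : {m : Fin n → ℕ // ∑ j, m j = k} => F m.1)
        = fun m => cc k * ((Nat.multinomial Finset.univ m.1 : ℝ) * ∏ j, u j ^ m.1 j) := by
      funext m
      simp only [hFdef]
      rw [m.2]
    rw [heq]
    exact (fiber_hasSum u k).mul_left (cc k)
  have hfib_abs : ∀ k, HasSum (fun m : {m : Fin n → ℕ // ∑ j, m j = k} => |F m.1|)
      (cc k * (∑ j, |u j|) ^ k) := by
    intro k
    have heq : (fun m : {m : Fin n → ℕ // ∑ j, m j = k} => |F m.1|)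
        = fun m => cc k * ((Nat.multinomial Finset.univ m.1 : ℝ) * ∏ j, |u j| ^ m.1 j) := by
      funext m
      simp only [hFdef]
      rw [m.2, abs_mul, abs_mul, abs_of_nonneg (cc_pos k).le,
        abs_of_nonneg (by positivity : (0:ℝ) ≤ (Nat.multinomial Finset.univ m.1 : ℝ)),
        Finset.abs_prod]
      congr 2
      exact Finset.prod_congr rfl fun j _ => abs_pow _ _
    rw [heq]
    exact (fiber_hasSum (fun j => |u j|) k).mul_left (cc k)
  have hsumabs : Summable fun p : (Σ k : ℕ, {m : Fin n → ℕ // ∑ j, m j = k}) => |F (σ p)| := by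
    refine (summable_sigma_of_nonneg fun p => abs_nonneg _).2 ⟨fun k => (hfib_abs k).summable, ?_⟩
    have heq : (fun k => ∑' m : {m : Fin n → ℕ // ∑ j, m j = k}, |F (σ ⟨k, m⟩)|)
        = fun k => cc k * (∑ j, |u j|) ^ k := funext fun k => (hfib_abs k).tsum_eq
    rw [heq]
    exact summable_cc_mul habs2
  have hFsigma : Summable fun p : (Σ k : ℕ, {m : Fin n → ℕ // ∑ j, m j = k}) => F (σ p) :=
    Summable.of_abs hsumabs
  have hmain := HasSum.sigma_of_hasSum (hasSum_cc habs) (fun k => hfib k) hFsigma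
  exact (Equiv.hasSum_iff σ).mp hmain

lemma multinomial_zero' {n : ℕ} : Nat.multinomial (Finset.univ : Finset (Fin n)) 0 = 1 := by
  have h := Nat.multinomial_spec (Finset.univ : Finset (Fin n)) 0
  simpa using h

lemma core_ne {n : ℕ} (u : Fin n → ℝ) (h : ∑ j, |u j| < 1) :
    HasSum (fun m : {m : Fin n → ℕ // m ≠ 0} =>
        cc (∑ j, m.1 j) * ((Nat.multinomial Finset.univ m.1 : ℝ) * ∏ j, u j ^ m.1 j))
      (1 / Real.sqrt (1 - ∑ j, u j) - 1) := by
  classical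
  set F : (Fin n → ℕ) → ℝ := fun m =>
    cc (∑ j, m j) * ((Nat.multinomial Finset.univ m : ℝ) * ∏ j, u j ^ m j) with hFdef
  have h0 : F 0 = 1 := by
    simp [hFdef, cc_zero, multinomial_zero']
  have hfull : HasSum F ((1 / Real.sqrt (1 - ∑ j, u j) - 1) + ∑ m ∈ ({0} : Finset (Fin n → ℕ)), F m) := by
    rw [Finset.sum_singleton, h0]
    simpa using core u h
  have hcompl := (Finset.hasSum_compl_iff ({0} : Finset (Fin n → ℕ))).2 hfull
  exact ((Equiv.subtypeEquivRight
    (fun m => by simp :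
      ∀ m : Fin n → ℕ, m ∉ ({0} : Finset (Fin n → ℕ)) ↔ m ≠ 0)).hasSum_iff).mp hcompl

lemma rpow_sum' {x : ℝ} (hx : 0 < x) {ι : Type*} (t : Finset ι) (f : ι → ℝ) :
    x ^ (∑ i ∈ t, f i) = ∏ i ∈ t, x ^ f i := by
  classical
  induction t using Finset.cons_induction with
  | empty => simp
  | cons i t hit ih => rw [Finset.sum_cons, Real.rpow_add hx, ih, Finset.prod_cons]

lemma const_eq {ι : Type*} [Fintype ι] (m : ι → ℕ) :
    (((2 * ∑ j, m j).factorial : ℝ) /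
        (4 ^ (∑ j, m j) * (((∑ j, m j).factorial : ℝ)) ^ 2))
      * (((∑ j, m j).factorial : ℝ) / ∏ j, ((m j).factorial : ℝ))
    = cc (∑ j, m j) * (Nat.multinomial Finset.univ m : ℝ) := by
  set k := ∑ j, m j with hk
  have hnat : Nat.centralBinom k * k.factorial * k.factorial = (2 * k).factorial := by
    have h := Nat.choose_mul_factorial_mul_factorial (show k ≤ 2 * k by omega)
    rw [Nat.centralBinom_eq_two_mul_choose]
    simpa [show 2 * k - k = k by omega] using h
  have h1 : (Nat.centralBinom k : ℝ) * (k.factorial : ℝ) * (k.factorial : ℝ)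
      = ((2 * k).factorial : ℝ) := by exact_mod_cast congrArg (Nat.cast (R := ℝ)) hnat
  have h2 : (∏ j, ((m j).factorial : ℝ)) * (Nat.multinomial Finset.univ m : ℝ)
      = (k.factorial : ℝ) := by
    have h := Nat.multinomial_spec (Finset.univ : Finset ι) m
    exact_mod_cast congrArg (Nat.cast (R := ℝ)) h
  have hfac : (0:ℝ) < (k.factorial : ℝ) := by exact_mod_cast k.factorial_pos
  have hprod : (0:ℝ) < ∏ j, ((m j).factorial : ℝ) :=
    Finset.prod_pos fun j _ => by exact_mod_cast (m j).factorial_pos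
  have hcB : ((2 * k).factorial : ℝ) = (Nat.centralBinom k : ℝ) * (k.factorial : ℝ) ^ 2 := by
    rw [← h1]; ring
  have hmult : (Nat.multinomial Finset.univ m : ℝ)
      = (k.factorial : ℝ) / ∏ j, ((m j).factorial : ℝ) := by
    rw [eq_div_iff hprod.ne']
    linear_combination h2
  rw [hcB, hmult, cc]
  field_simp

/-- Multi-index expansion of the isotropic-map integral for a generalized
Kiselev-type metric function f(x) = 1 − ξ(x) with ξ(x) = r_g/x + Σᵢ Kᵢ x^{−sᵢ}:
the family of multi-index terms T(m), m ≠ 0, is summable with sum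
∫_a^r (1/√(1 − ξ(x)) − 1)/x dx, provided |r_g|/x + Σᵢ |Kᵢ| x^{−sᵢ} < 1 on [a,r]. -/
theorem kiselev_multiindex_expansion
    (N : ℕ) (r_g : ℝ) (K s : Fin N → ℝ)
    (ξ : ℝ → ℝ)
    (hξ : ∀ x : ℝ, ξ x = r_g / x + ∑ i : Fin N, K i * x ^ (-(s i)))
    (a r : ℝ) (ha : 0 < a) (har : a ≤ r)
    (hsmall : ∀ x ∈ Set.Icc a r,
      |r_g| / x + ∑ i : Fin N, |K i| * x ^ (-(s i)) < 1)
    (T : (Fin (N + 1) → ℕ) → ℝ)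
    (hT : ∀ m : Fin (N + 1) → ℕ,
      T m = (((2 * ∑ j, m j).factorial : ℝ) /
              (4 ^ (∑ j, m j) * (((∑ j, m j).factorial : ℝ)) ^ 2))
            * (((∑ j, m j).factorial : ℝ) / ∏ j, ((m j).factorial : ℝ))
            * r_g ^ (m 0) * (∏ i : Fin N, K i ^ (m i.succ))
            * ∫ x in a..r,
                x ^ (-1 - ((m 0 : ℝ) + ∑ i : Fin N, (m i.succ : ℝ) * s i))) :
    HasSum (fun m : {m : Fin (N + 1) → ℕ // m ≠ 0} => T m.1)
      (∫ x in a..r, (1 / Real.sqrt (1 - ξ x) - 1) / x) := by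
  classical
  set u : ℝ → Fin (N + 1) → ℝ :=
    fun x => Fin.cons (r_g / x) (fun i => K i * x ^ (-(s i))) with hu
  have hx0 : ∀ x ∈ Set.Icc a r, 0 < x := fun x hx => lt_of_lt_of_le ha hx.1
  have husum : ∀ x : ℝ, ∑ j, u x j = ξ x := by
    intro x
    rw [hξ x, hu, Fin.sum_univ_succ]
    simp [Fin.cons_zero, Fin.cons_succ]
  have huabs_eq : ∀ x : ℝ, 0 < x →
      ∑ j, |u x j| = |r_g| / x + ∑ i, |K i| * x ^ (-(s i)) := by
    intro x hx
    rw [hu, Fin.sum_univ_succ]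
    simp only [Fin.cons_zero, Fin.cons_succ]
    rw [abs_div, abs_of_pos hx]
    congr 1
    exact Finset.sum_congr rfl fun i _ => by
      rw [abs_mul, abs_of_pos (Real.rpow_pos_of_pos hx _)]
  have hbar : ∀ x ∈ Set.Icc a r, ∑ j, |u x j| < 1 := fun x hx => by
    rw [huabs_eq x (hx0 x hx)]; exact hsmall x hx
  set G : {m : Fin (N + 1) → ℕ // m ≠ 0} → ℝ → ℝ := fun m x =>
    (cc (∑ j, m.1 j) * ((Nat.multinomial Finset.univ m.1 : ℝ) * ∏ j, u x j ^ m.1 j)) / x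
    with hG
  have hpt : ∀ x ∈ Set.Icc a r,
      HasSum (fun m => G m x) ((1 / Real.sqrt (1 - ξ x) - 1) / x) := by
    intro x hx
    have h1 := (core_ne (u x) (hbar x hx)).div_const x
    rw [husum x] at h1
    exact h1
  have hptabs : ∀ x ∈ Set.Icc a r,
      HasSum (fun m => |G m x|) ((1 / Real.sqrt (1 - ∑ j, |u x j|) - 1) / x) := by
    intro x hx
    have hxpos := hx0 x hx
    have h1 := (core_ne (fun j => |u x j|)
      (by simpa [abs_abs] using hbar x hx)).div_const x
    have heq : (fun m : {m : Fin (N + 1) → ℕ // m ≠ 0} =>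
        (cc (∑ j, m.1 j) * ((Nat.multinomial Finset.univ m.1 : ℝ)
          * ∏ j, |u x j| ^ m.1 j)) / x)
        = fun m => |G m x| := by
      funext m
      rw [hG]
      simp only
      rw [abs_div, abs_of_pos hxpos, abs_mul, abs_of_nonneg (cc_pos _).le, abs_mul,
        abs_of_nonneg (by positivity : (0:ℝ) ≤ (Nat.multinomial Finset.univ m.1 : ℝ)),
        Finset.abs_prod]
      simp only [abs_pow]
    rw [heq] at h1
    exact h1
  have hGeq : ∀ (m : {m : Fin (N + 1) → ℕ // m ≠ 0}), ∀ x ∈ Set.Ioc a r,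
      G m x = (cc (∑ j, m.1 j) * (Nat.multinomial Finset.univ m.1 : ℝ)
          * r_g ^ (m.1 0) * ∏ i, K i ^ (m.1 i.succ))
        * x ^ (-1 - ((m.1 0 : ℝ) + ∑ i, (m.1 i.succ : ℝ) * s i)) := by
    intro m x hx
    have hxpos : 0 < x := lt_of_lt_of_le ha hx.1.le
    rw [hG]
    simp only [hu, Fin.prod_univ_succ, Fin.cons_zero, Fin.cons_succ]
    have hxpow : ∀ i : Fin N, (K i * x ^ (-(s i))) ^ (m.1 i.succ)
        = K i ^ (m.1 i.succ) * x ^ (-(s i) * (m.1 i.succ : ℝ)) := by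
      intro i
      rw [mul_pow, ← Real.rpow_natCast (x ^ (-(s i))) (m.1 i.succ),
        ← Real.rpow_mul hxpos.le]
    rw [Finset.prod_congr rfl fun i _ => hxpow i, Finset.prod_mul_distrib]
    have hexp : (-1 - ((m.1 0 : ℝ) + ∑ i, (m.1 i.succ : ℝ) * s i))
        = (-1) + (-(m.1 0 : ℝ)) + ∑ i, (-(s i)) * (m.1 i.succ : ℝ) := by
      rw [show ∑ i, (-(s i)) * ((m.1 i.succ : ℕ) : ℝ)
          = -∑ i, ((m.1 i.succ : ℕ) : ℝ) * s i from by
        rw [← Finset.sum_neg_distrib]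
        exact Finset.sum_congr rfl fun i _ => by ring]
      ring
    rw [hexp, Real.rpow_add hxpos, Real.rpow_add hxpos, rpow_sum' hxpos,
      Real.rpow_neg_one, Real.rpow_neg hxpos.le, Real.rpow_natCast, div_pow]
    have hxne : x ≠ 0 := hxpos.ne'
    have hxpowne : (x : ℝ) ^ (m.1 0) ≠ 0 := pow_ne_zero _ hxne
    field_simp
  have hcontpow : ∀ c : ℝ, ContinuousOn (fun x : ℝ => x ^ c) (Set.Icc a r) :=
    fun c x hx =>
      (Real.continuousAt_rpow_const x c (Or.inl (hx0 x hx).ne')).continuousWithinAt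
  have hint : ∀ m : {m : Fin (N + 1) → ℕ // m ≠ 0},
      IntegrableOn (G m) (Set.Ioc a r) := by
    intro m
    have h1 : IntegrableOn (fun x =>
        (cc (∑ j, m.1 j) * (Nat.multinomial Finset.univ m.1 : ℝ)
          * r_g ^ (m.1 0) * ∏ i, K i ^ (m.1 i.succ))
        * x ^ (-1 - ((m.1 0 : ℝ) + ∑ i, (m.1 i.succ : ℝ) * s i))) (Set.Ioc a r) :=
      ((continuousOn_const.mul (hcontpow _)).integrableOn_Icc).mono_set
        Set.Ioc_subset_Icc_self
    exact h1.congr_fun (fun x hx => (hGeq m x hx).symm) measurableSet_Ioc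
  set H : ℝ → ℝ := fun x => (1 / Real.sqrt (1 - ∑ j, |u x j|) - 1) / x with hH
  have hHcont : ContinuousOn H (Set.Icc a r) := by
    have c1 : ContinuousOn (fun x => ∑ j, |u x j|) (Set.Icc a r) := by
      apply continuousOn_finset_sum
      intro j _
      refine Fin.cases ?_ ?_ j
      · have h : ContinuousOn (fun x : ℝ => r_g / x) (Set.Icc a r) :=
          continuousOn_const.div continuousOn_id fun x hx => (hx0 x hx).ne'
        simpa [hu] using h.abs
      · intro i
        have h : ContinuousOn (fun x : ℝ => K i * x ^ (-(s i))) (Set.Icc a r) :=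
          continuousOn_const.mul (hcontpow _)
        simpa [hu] using h.abs
    have c2 : ContinuousOn (fun x => Real.sqrt (1 - ∑ j, |u x j|)) (Set.Icc a r) :=
      Real.continuous_sqrt.comp_continuousOn (continuousOn_const.sub c1)
    have c3 : ContinuousOn (fun x => 1 / Real.sqrt (1 - ∑ j, |u x j|)) (Set.Icc a r) :=
      continuousOn_const.div c2 fun x hx =>
        (Real.sqrt_pos.2 (by linarith [hbar x hx])).ne'
    exact (c3.sub continuousOn_const).div continuousOn_id fun x hx => (hx0 x hx).ne'
  have hHint : IntegrableOn H (Set.Ioc a r) :=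
    hHcont.integrableOn_Icc.mono_set Set.Ioc_subset_Icc_self
  have hnonneg : ∀ m : {m : Fin (N + 1) → ℕ // m ≠ 0},
      0 ≤ ∫ x in Set.Ioc a r, ‖G m x‖ :=
    fun m => integral_nonneg fun x => norm_nonneg _
  have hsum : Summable fun m : {m : Fin (N + 1) → ℕ // m ≠ 0} =>
      ∫ x in Set.Ioc a r, ‖G m x‖ := by
    apply summable_of_sum_le hnonneg
    intro U
    have habs_int : ∀ m ∈ U, IntegrableOn (fun x => ‖G m x‖) (Set.Ioc a r) :=
      fun m _ => (hint m).norm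
    calc ∑ m ∈ U, ∫ x in Set.Ioc a r, ‖G m x‖
        = ∫ x in Set.Ioc a r, ∑ m ∈ U, ‖G m x‖ := (integral_finset_sum U habs_int).symm
      _ ≤ ∫ x in Set.Ioc a r, H x := by
          refine setIntegral_mono_on (integrable_finset_sum U habs_int) hHint
            measurableSet_Ioc fun x hx => ?_
          have hxmem : x ∈ Set.Icc a r := Set.Ioc_subset_Icc_self hx
          have h := hptabs x hxmem
          simp only [Real.norm_eq_abs]
          exact sum_le_hasSum U (fun m _ => abs_nonneg _) h
  have hmain := MeasureTheory.hasSum_integral_of_summable_integral_norm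
    (μ := volume.restrict (Set.Ioc a r)) (F := G) hint hsum
  have hsumeq : (∫ x in Set.Ioc a r, (∑' m, G m x))
      = ∫ x in Set.Ioc a r, (1 / Real.sqrt (1 - ξ x) - 1) / x :=
    setIntegral_congr_fun measurableSet_Ioc fun x hx =>
      (hpt x (Set.Ioc_subset_Icc_self hx)).tsum_eq
  have hfun : (fun m : {m : Fin (N + 1) → ℕ // m ≠ 0} => ∫ x in Set.Ioc a r, G m x)
      = fun m => T m.1 := by
    funext m
    rw [hT m.1, intervalIntegral.integral_of_le har,
      setIntegral_congr_fun measurableSet_Ioc (fun x hx => hGeq m x hx),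
      MeasureTheory.integral_const_mul, const_eq m.1]
  rw [intervalIntegral.integral_of_le har, ← hsumeq, ← hfun]
  exact hmain
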